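/- Let $\varepsilon > 0$ and let $(A_j)_{j \ge 0}$ and $(D_j)_{j \ge 0}$ be nondecreasing sequences of finite sets with $A_{-1} = D_{-1} = \emptyset$, eventually constant with limits $A$ and $D$ respectively, such that $|D_j| \le \varepsilon |A_j|$ for all $j \ge 0$. Suppose every element $e \in A$ that first appears in $A_j \setminus A_{j-1}$ has weight $w_e = (1+\varepsilon)^{-j}$, and every element $e \in D$ that first appears in $D_j \setminus D_{j-1}$ has weight $w_e \le (1+\varepsilon)^{-j}$. Then $\sum_{e \in D} w_e \le \varepsilon \sum_{e \in A} w_e$. -/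
import Mathlib


open Finset

/-- Abel-summation bound: total weight on dormant elements is at most `ε` times the
total weight on active elements, under the tidy property. -/
theorem dormant_weight_le {α : Type*} [DecidableEq α] (ε : ℝ) (hε : 0 < ε)
    (A D : ℕ → Finset α) (hA : Monotone A) (hD : Monotone D)
    (N : ℕ) (hAN : ∀ j, A j ⊆ A N) (hDN : ∀ j, D j ⊆ D N)
    (w : α → ℝ)
    (htidy : ∀ j, ((D j).card : ℝ) ≤ ε * (A j).card)
    (hwA : ∀ j, ∀ e ∈ A j, (∀ i, i < j → e ∉ A i) → w e = (1 + ε) ^ (-(j : ℤ)))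
    (hwD : ∀ j, ∀ e ∈ D j, (∀ i, i < j → e ∉ D i) → w e ≤ (1 + ε) ^ (-(j : ℤ))) :
    ∑ e ∈ D N, w e ≤ ε * ∑ e ∈ A N, w e := by
  classical
  set f : ℕ → ℝ := fun j => (1 + ε) ^ (-(j : ℤ)) with hf
  have h1 : (1:ℝ) ≤ 1 + ε := by linarith
  have hfpos : ∀ j, 0 ≤ f j := fun j => le_of_lt (zpow_pos (by linarith) _)
  have hfmono : ∀ i : ℕ, f (i+1) ≤ f i := by
    intro i
    apply zpow_le_zpow_right₀ h1
    push_cast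
    linarith
  have tele : ∀ l n : ℕ, l ≤ n → ∑ i ∈ Finset.Ico l n, (f i - f (i+1)) = f l - f n := by
    intro l n h
    induction n with
    | zero => simp [Nat.le_zero.mp h]
    | succ n ih =>
      rcases Nat.lt_or_ge l (n+1) with h' | h'
      · have hl : l ≤ n := Nat.lt_succ_iff.mp h'
        rw [Finset.sum_Ico_succ_top hl, ih hl]; ring
      · have : l = n + 1 := le_antisymm h h'
        simp [this]
  have key : ∀ (S : ℕ → Finset α), (∀ j, S j ⊆ S N) → Monotone S →
      ∀ (lev : α → ℕ), (∀ e ∈ S N, e ∈ S (lev e)) → (∀ e ∈ S N, ∀ i, e ∈ S i → lev e ≤ i) →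
      ∑ e ∈ S N, f (lev e)
        = (S N).card * f N + ∑ i ∈ Finset.range N, (S i).card * (f i - f (i+1)) := by
    intro S hSN hS lev hlev1 hlev2
    have step : ∀ e ∈ S N, f (lev e)
        = f N + ∑ i ∈ Finset.range N, (if e ∈ S i then f i - f (i+1) else 0) := by
      intro e he
      have hle : lev e ≤ N := hlev2 e he N he
      have hfilter : (Finset.range N).filter (fun i => e ∈ S i) = Finset.Ico (lev e) N := by
        ext i
        simp only [Finset.mem_filter, Finset.mem_range, Finset.mem_Ico]
        constructor
        · rintro ⟨hi, hei⟩; exact ⟨hlev2 e he i hei, hi⟩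
        · rintro ⟨hi, hi'⟩; exact ⟨hi', hS hi (hlev1 e he)⟩
      rw [← Finset.sum_filter, hfilter, tele _ _ hle]
      ring
    rw [Finset.sum_congr rfl step, Finset.sum_add_distrib, Finset.sum_const, nsmul_eq_mul]
    congr 1
    rw [Finset.sum_comm]
    refine Finset.sum_congr rfl fun i _ => ?_
    rw [← Finset.sum_filter, Finset.sum_const, nsmul_eq_mul]
    congr 2
    rw [Finset.filter_mem_eq_inter, Finset.inter_eq_right.mpr (hSN i)]
  -- levels
  have levA : ∀ e ∈ A N, ∃ j, e ∈ A j := fun e he => ⟨N, he⟩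
  set lA : α → ℕ := fun e => if h : ∃ j, e ∈ A j then Nat.find h else 0 with hlA
  set lD : α → ℕ := fun e => if h : ∃ j, e ∈ D j then Nat.find h else 0 with hlD
  have hlA1 : ∀ e ∈ A N, e ∈ A (lA e) := by
    intro e he
    have h : ∃ j, e ∈ A j := ⟨N, he⟩
    simp only [hlA, dif_pos h]
    exact Nat.find_spec h
  have hlA2 : ∀ e ∈ A N, ∀ i, e ∈ A i → lA e ≤ i := by
    intro e he i hi
    have h : ∃ j, e ∈ A j := ⟨N, he⟩
    simp only [hlA, dif_pos h]
    exact Nat.find_min' h hi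
  have hlD1 : ∀ e ∈ D N, e ∈ D (lD e) := by
    intro e he
    have h : ∃ j, e ∈ D j := ⟨N, he⟩
    simp only [hlD, dif_pos h]
    exact Nat.find_spec h
  have hlD2 : ∀ e ∈ D N, ∀ i, e ∈ D i → lD e ≤ i := by
    intro e he i hi
    have h : ∃ j, e ∈ D j := ⟨N, he⟩
    simp only [hlD, dif_pos h]
    exact Nat.find_min' h hi
  have hAeq : ∀ e ∈ A N, w e = f (lA e) := by
    intro e he
    refine hwA (lA e) e (hlA1 e he) ?_
    intro i hi hei
    exact absurd (hlA2 e he i hei) (Nat.not_le.mpr hi)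
  have hDle : ∀ e ∈ D N, w e ≤ f (lD e) := by
    intro e he
    refine hwD (lD e) e (hlD1 e he) ?_
    intro i hi hei
    exact absurd (hlD2 e he i hei) (Nat.not_le.mpr hi)
  have kD := key D hDN hD lD hlD1 hlD2
  have kA := key A hAN hA lA hlA1 hlA2
  calc ∑ e ∈ D N, w e ≤ ∑ e ∈ D N, f (lD e) := Finset.sum_le_sum hDle
    _ = (D N).card * f N + ∑ i ∈ Finset.range N, (D i).card * (f i - f (i+1)) := kD
    _ ≤ ε * ((A N).card * f N + ∑ i ∈ Finset.range N, (A i).card * (f i - f (i+1))) := by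
        rw [mul_add, Finset.mul_sum]
        refine add_le_add ?_ ?_
        · rw [← mul_assoc]
          exact mul_le_mul_of_nonneg_right (htidy N) (hfpos N)
        · refine Finset.sum_le_sum fun i _ => ?_
          have h' := mul_le_mul_of_nonneg_right (htidy i) (sub_nonneg.mpr (hfmono i))
          calc ((D i).card : ℝ) * (f i - f (i+1)) ≤ ε * (A i).card * (f i - f (i+1)) := h'
            _ = ε * ((A i).card * (f i - f (i+1))) := by ring
    _ = ε * ∑ e ∈ A N, f (lA e) := by rw [kA]
    _ = ε * ∑ e ∈ A N, w e := by
        congr 1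
        exact (Finset.sum_congr rfl hAeq).symm
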